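/- Let H be a finite-dimensional complex Hilbert space, let P = (P_1,...,P_m) and Q = (Q_1,...,Q_n) be projective measurements (each P_i and Q_j an orthogonal projection with sum equal to the identity), and let ψ be a unit vector. Define p_i = ⟨ψ, P_i ψ⟩ and q_j = ⟨ψ, Q_j ψ⟩. Then H(P,ψ) + H(Q,ψ) ≥ -2 log₂ max_{i,j} |⟨ψ, P_i Q_j ψ⟩| / (‖P_i ψ‖ ‖Q_j ψ‖), where H(P,ψ) = -Σ_i p_i log₂ p_i, H(Q,ψ) = -Σ_j q_j log₂ q_j, and the maximum is over indices i,j with P_i ψ ≠ 0 and Q_j ψ ≠ 0. -/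

import Mathlib

open Complex Finset

lemma riesz_thorin_step {I J : Type*} [Fintype I] [Fintype J]
    (x : I → ℝ) (y : J → ℝ) (T : J → I → ℂ) (c : ℝ) (t : ℝ)
    (hx : ∀ i, 0 < x i) (hy : ∀ j, 0 < y j) (hc : 0 < c)
    (hTc : ∀ j i, ‖T j i‖ ≤ c)
    (hT2 : ∀ ξ : I → ℂ, ∑ j, ‖∑ i, T j i * ξ i‖ ^ 2 ≤ ∑ i, ‖ξ i‖ ^ 2)
    (hyx : ∀ j, (y j : ℂ) = ∑ i, T j i * (x i : ℂ))
    (ht0 : 0 < t) (ht1 : t < 1) :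
    (∑ j, y j ^ (2 / t)) ^ (t / 2) ≤
      c ^ (1 - t) * (∑ i, x i ^ (2 / (2 - t))) ^ ((2 - t) / 2) := by
  rcases isEmpty_or_nonempty J with hJ | hJ
  · rw [Finset.univ_eq_empty (α := J), Finset.sum_empty, Real.zero_rpow (by positivity)]
    exact mul_nonneg (Real.rpow_nonneg hc.le _)
      (Real.rpow_nonneg (Finset.sum_nonneg fun i _ => Real.rpow_nonneg (hx i).le _) _)
  have h2t : 0 < 2 - t := by linarith
  set κ : ℝ := 2 / (2 - t) with hκdef
  have hκ : 0 < κ := by positivity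
  have hκle : κ ≤ 2 := by
    rw [hκdef, div_le_iff₀ h2t]; nlinarith
  set A : ℝ := ∑ i, x i ^ κ with hAdef
  set S : ℝ := ∑ j, y j ^ (2 / t) with hSdef
  have hS : 0 < S := Finset.sum_pos (fun j _ => Real.rpow_pos_of_pos (hy j) _) univ_nonempty
  have hI : Nonempty I := by
    by_contra h
    rw [not_nonempty_iff] at h
    obtain ⟨j⟩ := hJ
    have := hyx j
    rw [Finset.univ_eq_empty, Finset.sum_empty] at this
    exact absurd (Complex.ofReal_eq_zero.mp this) (ne_of_gt (hy j))
  have hA : 0 < A := Finset.sum_pos (fun i _ => Real.rpow_pos_of_pos (hx i) _) univ_nonempty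
  -- the dual vector
  set w : J → ℝ := fun j => y j ^ ((2 - t) / t) / S ^ ((2 - t) / 2) with hwdef
  have hw : ∀ j, 0 < w j := fun j =>
    div_pos (Real.rpow_pos_of_pos (hy j) _) (Real.rpow_pos_of_pos hS _)
  have hwκ : ∑ j, w j ^ κ = 1 := by
    have hj : ∀ j, w j ^ κ = y j ^ (2 / t) / S := by
      intro j
      show (y j ^ ((2 - t) / t) / S ^ ((2 - t) / 2)) ^ κ = _
      rw [Real.div_rpow (Real.rpow_nonneg (hy j).le _) (Real.rpow_nonneg hS.le _),
        ← Real.rpow_mul (hy j).le, ← Real.rpow_mul hS.le,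
        show (2 - t) / t * κ = 2 / t by rw [hκdef]; field_simp,
        show (2 - t) / 2 * κ = 1 by rw [hκdef]; field_simp,
        Real.rpow_one]
    rw [Finset.sum_congr rfl (fun j _ => hj j), ← Finset.sum_div, ← hSdef, div_self hS.ne']
  have hwy : ∑ j, w j * y j = S ^ (t / 2) := by
    have hj : ∀ j, w j * y j = y j ^ (2 / t) / S ^ ((2 - t) / 2) := by
      intro j
      show y j ^ ((2 - t) / t) / S ^ ((2 - t) / 2) * y j = _
      rw [div_mul_eq_mul_div]
      congr 1
      nth_rewrite 2 [← Real.rpow_one (y j)]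
      rw [← Real.rpow_add (hy j), show (2 - t) / t + 1 = 2 / t by field_simp; ring]
    rw [Finset.sum_congr rfl (fun j _ => hj j), ← Finset.sum_div, ← hSdef,
      show t / 2 = 1 - (2 - t) / 2 by ring, Real.rpow_sub hS, Real.rpow_one]
  -- the analytic family
  set e : ℂ → ℂ := fun z => (↑(κ / 2) : ℂ) * (2 - z) with hedef
  have here : ∀ z : ℂ, (e z).re = κ / 2 * (2 - z.re) := by
    intro z
    rw [hedef]
    simp [Complex.re_ofReal_mul, Complex.sub_re]
  set G : ℂ → ℂ := fun z => ∑ j, (w j : ℂ) ^ (e z) * (∑ i, T j i * (x i : ℂ) ^ (e z))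
    with hGdef
  have hediff : Differentiable ℂ e := by
    apply Differentiable.const_mul
    exact (differentiable_const _).sub differentiable_id
  have hGdiff : Differentiable ℂ G := by
    apply Differentiable.fun_sum
    intro j _
    apply Differentiable.mul
    · exact hediff.const_cpow (Or.inl (by exact_mod_cast (hw j).ne'))
    · apply Differentiable.fun_sum
      intro i _
      exact (hediff.const_cpow (Or.inl (by exact_mod_cast (hx i).ne'))).const_mul _
  have hnorm : ∀ (r : ℝ), 0 < r → ∀ z : ℂ, ‖(r : ℂ) ^ (e z)‖ = r ^ (κ / 2 * (2 - z.re)) := by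
    intro r hr z
    rw [Complex.norm_cpow_eq_rpow_re_of_pos hr, here]
  have sq_rpow : ∀ (r : ℝ), 0 ≤ r → (r ^ (κ / 2)) ^ 2 = r ^ κ := by
    intro r hr
    rw [← Real.rpow_natCast (r ^ (κ / 2)) 2, ← Real.rpow_mul hr]
    norm_num
  -- boundedness on the strip
  have hrb : ∀ (r : ℝ), 0 < r → ∀ a : ℝ, 0 ≤ a → a ≤ 2 →
      r ^ a ≤ Real.exp (2 * |Real.log r|) := by
    intro r hr a ha ha2
    rw [Real.rpow_def_of_pos hr]
    apply Real.exp_le_exp.mpr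
    calc Real.log r * a ≤ |Real.log r * a| := le_abs_self _
      _ = |Real.log r| * a := by rw [abs_mul, _root_.abs_of_nonneg ha]
      _ ≤ 2 * |Real.log r| := by nlinarith [abs_nonneg (Real.log r)]
  have hexp_mem : ∀ z : ℂ, z ∈ Complex.HadamardThreeLines.verticalClosedStrip 0 1 →
      0 ≤ κ / 2 * (2 - z.re) ∧ κ / 2 * (2 - z.re) ≤ 2 := by
    intro z hz
    obtain ⟨hz0, hz1⟩ := hz
    constructor
    · nlinarith
    · nlinarith
  have hB : BddAbove ((norm ∘ G) '' Complex.HadamardThreeLines.verticalClosedStrip 0 1) := by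
    refine ⟨∑ j, ∑ i, Real.exp (2 * |Real.log (w j)|) *
      (c * Real.exp (2 * |Real.log (x i)|)), ?_⟩
    rintro u ⟨z, hz, rfl⟩
    obtain ⟨ha0, ha2⟩ := hexp_mem z hz
    calc ‖G z‖ ≤ ∑ j, ‖(w j : ℂ) ^ (e z) * (∑ i, T j i * (x i : ℂ) ^ (e z))‖ :=
          norm_sum_le _ _
      _ ≤ ∑ j, ∑ i, Real.exp (2 * |Real.log (w j)|) *
          (c * Real.exp (2 * |Real.log (x i)|)) := by
        apply Finset.sum_le_sum
        intro j _
        rw [norm_mul]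
        calc ‖(w j : ℂ) ^ (e z)‖ * ‖∑ i, T j i * (x i : ℂ) ^ (e z)‖
            ≤ Real.exp (2 * |Real.log (w j)|) * ∑ i, c * Real.exp (2 * |Real.log (x i)|) := by
              apply mul_le_mul
              · rw [hnorm _ (hw j)]
                exact hrb _ (hw j) _ ha0 ha2
              · refine (norm_sum_le _ _).trans (Finset.sum_le_sum fun i _ => ?_)
                rw [norm_mul, hnorm _ (hx i)]
                exact mul_le_mul (hTc j i) (hrb _ (hx i) _ ha0 ha2)
                  (Real.rpow_nonneg (hx i).le _) (hc.le)
              · exact norm_nonneg _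
              · positivity
          _ = ∑ i, Real.exp (2 * |Real.log (w j)|) * (c * Real.exp (2 * |Real.log (x i)|)) := by
              rw [Finset.mul_sum]
  -- boundary estimate at re = 0
  have h0 : ∀ z : ℂ, z.re = 0 → ‖G z‖ ≤ c * A := by
    intro z hz
    have hexp : κ / 2 * (2 - z.re) = κ := by rw [hz]; ring
    calc ‖G z‖ ≤ ∑ j, ‖(w j : ℂ) ^ (e z) * (∑ i, T j i * (x i : ℂ) ^ (e z))‖ :=
          norm_sum_le _ _
      _ ≤ ∑ j, w j ^ κ * (c * A) := by
        apply Finset.sum_le_sum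
        intro j _
        rw [norm_mul, hnorm _ (hw j), hexp]
        apply mul_le_mul_of_nonneg_left _ (Real.rpow_nonneg (hw j).le _)
        calc ‖∑ i, T j i * (x i : ℂ) ^ (e z)‖ ≤ ∑ i, c * x i ^ κ := by
              refine (norm_sum_le _ _).trans (Finset.sum_le_sum fun i _ => ?_)
              rw [norm_mul, hnorm _ (hx i), hexp]
              exact mul_le_mul (hTc j i) le_rfl (Real.rpow_nonneg (hx i).le _) hc.le
          _ = c * A := by rw [← Finset.mul_sum]
      _ = c * A := by rw [← Finset.sum_mul, hwκ, one_mul]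
  -- boundary estimate at re = 1
  have h1 : ∀ z : ℂ, z.re = 1 → ‖G z‖ ≤ A ^ ((1 : ℝ) / 2) := by
    intro z hz
    have hexp : κ / 2 * (2 - z.re) = κ / 2 := by rw [hz]; ring
    have hGle : ‖G z‖ ≤ ∑ j, w j ^ (κ / 2) * ‖∑ i, T j i * (x i : ℂ) ^ (e z)‖ := by
      refine (norm_sum_le _ _).trans (Finset.sum_le_sum fun j _ => ?_)
      rw [norm_mul, hnorm _ (hw j), hexp]
    have hCS : (∑ j, w j ^ (κ / 2) * ‖∑ i, T j i * (x i : ℂ) ^ (e z)‖) ^ 2 ≤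
        (∑ j, (w j ^ (κ / 2)) ^ 2) * ∑ j, ‖∑ i, T j i * (x i : ℂ) ^ (e z)‖ ^ 2 :=
      Finset.sum_mul_sq_le_sq_mul_sq _ _ _
    have hw2 : (∑ j, (w j ^ (κ / 2)) ^ 2) = 1 := by
      rw [Finset.sum_congr rfl fun j _ => sq_rpow _ (hw j).le, hwκ]
    have hx2 : (∑ j, ‖∑ i, T j i * (x i : ℂ) ^ (e z)‖ ^ 2) ≤ A := by
      refine (hT2 _).trans ?_
      apply le_of_eq
      apply Finset.sum_congr rfl
      intro i _
      rw [hnorm _ (hx i), hexp]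
      exact sq_rpow _ (hx i).le
    have hsum_nonneg : 0 ≤ ∑ j, w j ^ (κ / 2) * ‖∑ i, T j i * (x i : ℂ) ^ (e z)‖ :=
      Finset.sum_nonneg fun j _ => mul_nonneg (Real.rpow_nonneg (hw j).le _) (norm_nonneg _)
    have : ‖G z‖ ^ 2 ≤ A := by
      nlinarith [norm_nonneg (G z)]
    rw [← Real.sqrt_eq_rpow]
    exact (Real.le_sqrt (norm_nonneg _) hA.le).mpr this
  -- apply Hadamard three lines
  have hmem : (t : ℂ) ∈ Complex.HadamardThreeLines.verticalClosedStrip 0 1 := by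
    simp only [Complex.HadamardThreeLines.verticalClosedStrip, Set.mem_preimage,
      Complex.ofReal_re, Set.mem_Icc]
    exact ⟨ht0.le, ht1.le⟩
  have h3 := Complex.HadamardThreeLines.norm_le_interp_of_mem_verticalClosedStrip₀₁' G
    (a := c * A) (b := A ^ ((1 : ℝ) / 2)) hmem hGdiff.diffContOnCl hB
    (fun z hz => h0 z hz) (fun z hz => h1 z hz)
  rw [Complex.ofReal_re] at h3
  -- evaluate G at t
  have het : e (t : ℂ) = 1 := by
    rw [hedef]
    show ((κ / 2 : ℝ) : ℂ) * (2 - (t : ℂ)) = 1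
    rw [show ((2 : ℂ) - (t : ℂ)) = ((2 - t : ℝ) : ℂ) by push_cast; ring,
      ← Complex.ofReal_mul, show κ / 2 * (2 - t) = 1 by rw [hκdef]; field_simp,
      Complex.ofReal_one]
  have hGt : G (t : ℂ) = ((S ^ (t / 2) : ℝ) : ℂ) := by
    rw [hGdef]
    simp only [het, Complex.cpow_one]
    rw [← hwy]
    push_cast
    apply Finset.sum_congr rfl
    intro j _
    rw [← hyx j]
  have hGtnorm : ‖G (t : ℂ)‖ = S ^ (t / 2) := by
    rw [hGt, Complex.norm_real, Real.norm_of_nonneg (Real.rpow_nonneg hS.le _)]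
  rw [hGtnorm] at h3
  refine h3.trans (le_of_eq ?_)
  rw [Real.mul_rpow hc.le hA.le, ← Real.rpow_mul hA.le, mul_assoc, ← Real.rpow_add hA]
  congr 1
  ring

lemma deriv_rpow_sum {ι : Type*} [Fintype ι] (v : ι → ℝ) (hv : ∀ i, 0 < v i)
    (u : ℝ → ℝ) (u' t₀ : ℝ) (hu : HasDerivAt u u' t₀) :
    HasDerivAt (fun t => ∑ i, v i ^ (u t)) (∑ i, v i ^ (u t₀) * Real.log (v i) * u') t₀ := by
  apply HasDerivAt.fun_sum
  intro i _
  have h1 : HasDerivAt (fun t => Real.log (v i) * u t) (Real.log (v i) * u') t₀ :=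
    hu.const_mul _
  have h2 := h1.exp
  have heq : (fun t => Real.exp (Real.log (v i) * u t)) = fun t => v i ^ (u t) := by
    funext s; rw [Real.rpow_def_of_pos (hv i)]
  rw [heq] at h2
  convert h2 using 1
  · rfl
  · rfl
  rw [Real.rpow_def_of_pos (hv i)]
  ring

lemma entropy_step {I J : Type*} [Fintype I] [Fintype J]
    (x : I → ℝ) (y : J → ℝ) (c : ℝ)
    (hx : ∀ i, 0 < x i) (hy : ∀ j, 0 < y j) (hc : 0 < c)
    (hx2 : ∑ i, x i ^ (2 : ℕ) = 1) (hy2 : ∑ j, y j ^ (2 : ℕ) = 1)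
    (hineq : ∀ t : ℝ, 0 < t → t < 1 →
      (∑ j, y j ^ (2 / t)) ^ (t / 2) ≤
        c ^ (1 - t) * (∑ i, x i ^ (2 / (2 - t))) ^ ((2 - t) / 2)) :
    ∑ i, x i ^ (2 : ℕ) * Real.log (x i ^ (2 : ℕ)) +
      ∑ j, y j ^ (2 : ℕ) * Real.log (y j ^ (2 : ℕ)) ≤ 2 * Real.log c := by
  have hINE : Nonempty I := by
    by_contra h
    rw [not_nonempty_iff] at h
    rw [Finset.univ_eq_empty, Finset.sum_empty] at hx2
    norm_num at hx2
  have hJNE : Nonempty J := by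
    by_contra h
    rw [not_nonempty_iff] at h
    rw [Finset.univ_eq_empty, Finset.sum_empty] at hy2
    norm_num at hy2
  set Sx : ℝ → ℝ := fun t => ∑ i, x i ^ (2 / (2 - t)) with hSxdef
  set Sy : ℝ → ℝ := fun t => ∑ j, y j ^ (2 / t) with hSydef
  have hSxpos : ∀ t, 0 < Sx t := fun t =>
    Finset.sum_pos (fun i _ => Real.rpow_pos_of_pos (hx i) _) univ_nonempty
  have hSypos : ∀ t, 0 < Sy t := fun t =>
    Finset.sum_pos (fun j _ => Real.rpow_pos_of_pos (hy j) _) univ_nonempty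
  have hrpow_two : ∀ (r : ℝ), 0 < r → r ^ ((2 : ℝ)) = r ^ (2 : ℕ) := by
    intro r hr
    rw [show ((2 : ℝ)) = ((2 : ℕ) : ℝ) by norm_num, Real.rpow_natCast]
  have hSx1 : Sx 1 = 1 := by
    rw [hSxdef]
    simp only [show (2 : ℝ) / (2 - 1) = 2 by norm_num]
    rw [← hx2]
    exact Finset.sum_congr rfl fun i _ => hrpow_two _ (hx i)
  have hSy1 : Sy 1 = 1 := by
    rw [hSydef]
    simp only [show (2 : ℝ) / 1 = 2 by norm_num]
    rw [← hy2]
    exact Finset.sum_congr rfl fun j _ => hrpow_two _ (hy j)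
  set f : ℝ → ℝ := fun t => (1 - t) * Real.log c + (2 - t) / 2 * Real.log (Sx t)
    - t / 2 * Real.log (Sy t) with hfdef
  have hf1 : f 1 = 0 := by
    rw [hfdef]
    simp [hSx1, hSy1]
  have hf_nonneg : ∀ t ∈ Set.Ioo (0 : ℝ) 1, 0 ≤ f t := by
    rintro t ⟨ht0, ht1⟩
    have := hineq t ht0 ht1
    have hlog := Real.log_le_log (Real.rpow_pos_of_pos (hSypos t) _) this
    rw [Real.log_rpow (hSypos t), Real.log_mul (Real.rpow_pos_of_pos hc _).ne'
      (Real.rpow_pos_of_pos (hSxpos t) _).ne',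
      Real.log_rpow hc, Real.log_rpow (hSxpos t)] at hlog
    rw [hfdef]
    dsimp only
    linarith
  -- derivative of f at 1
  have hu1 : HasDerivAt (fun t : ℝ => 2 / (2 - t)) 2 1 := by
    have h1 : HasDerivAt (fun t : ℝ => 2 - t) (-1) 1 := by
      simpa using (hasDerivAt_id (1 : ℝ)).const_sub 2
    have h2 := (h1.inv (by norm_num)).const_mul 2
    convert h2 using 1
    all_goals norm_num [div_eq_mul_inv]
    all_goals rfl
  have hu2 : HasDerivAt (fun t : ℝ => 2 / t) (-2) 1 := by
    have h1 : HasDerivAt (fun t : ℝ => t) 1 1 := hasDerivAt_id 1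
    have h2 := (h1.inv (by norm_num)).const_mul 2
    convert h2 using 1
    all_goals norm_num [div_eq_mul_inv]
    all_goals rfl
  have hSx' : HasDerivAt Sx (∑ i, x i ^ (2 : ℕ) * Real.log (x i) * 2) 1 := by
    have := deriv_rpow_sum x hx (fun t => 2 / (2 - t)) 2 1 hu1
    convert this using 2 with i
    rw [show (2 : ℝ) / (2 - 1) = (2 : ℝ) by norm_num, hrpow_two _ (hx i)]
  have hSy' : HasDerivAt Sy (∑ j, y j ^ (2 : ℕ) * Real.log (y j) * (-2)) 1 := by
    have := deriv_rpow_sum y hy (fun t => 2 / t) (-2) 1 hu2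
    convert this using 2 with j
    rw [show (2 : ℝ) / 1 = (2 : ℝ) by norm_num, hrpow_two _ (hy j)]
  have hLx : HasDerivAt (fun t => Real.log (Sx t)) (∑ i, x i ^ (2 : ℕ) * Real.log (x i) * 2) 1 := by
    have := hSx'.log (hSxpos 1).ne'
    simpa [hSx1] using this
  have hLy : HasDerivAt (fun t => Real.log (Sy t)) (∑ j, y j ^ (2 : ℕ) * Real.log (y j) * (-2)) 1 := by
    have := hSy'.log (hSypos 1).ne'
    simpa [hSy1] using this
  set D : ℝ := -Real.log c + ∑ i, x i ^ (2 : ℕ) * Real.log (x i) +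
    ∑ j, y j ^ (2 : ℕ) * Real.log (y j) with hDdef
  have hf' : HasDerivAt f D 1 := by
    have ha : HasDerivAt (fun t : ℝ => (1 - t) * Real.log c) (-Real.log c) 1 := by
      have : HasDerivAt (fun t : ℝ => 1 - t) (-1) 1 := by
        simpa using (hasDerivAt_id (1 : ℝ)).const_sub 1
      simpa using this.mul_const (Real.log c)
    have hb : HasDerivAt (fun t : ℝ => (2 - t) / 2 * Real.log (Sx t))
        ((-1 / 2) * Real.log (Sx 1) + (2 - 1) / 2 * (∑ i, x i ^ (2 : ℕ) * Real.log (x i) * 2)) 1 := by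
      have h1 : HasDerivAt (fun t : ℝ => (2 - t) / 2) (-1 / 2) 1 := by
        have : HasDerivAt (fun t : ℝ => 2 - t) (-1) 1 := by
          simpa using (hasDerivAt_id (1 : ℝ)).const_sub 2
        simpa using this.div_const 2
      exact h1.mul hLx
    have hcd : HasDerivAt (fun t : ℝ => t / 2 * Real.log (Sy t))
        ((1 / 2) * Real.log (Sy 1) + 1 / 2 * (∑ j, y j ^ (2 : ℕ) * Real.log (y j) * (-2))) 1 := by
      have h1 : HasDerivAt (fun t : ℝ => t / 2) (1 / 2) 1 := by
        simpa using (hasDerivAt_id (1 : ℝ)).div_const 2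
      exact h1.mul hLy
    have := (ha.add hb).sub hcd
    convert this using 1
    · rfl
    · rfl
    · rfl
    rw [hSx1, hSy1, hDdef]
    simp only [Real.log_one]
    rw [Finset.sum_congr rfl (fun (i : I) _ => by ring :
      ∀ i ∈ univ, x i ^ (2:ℕ) * Real.log (x i) * 2 = 2 * (x i ^ (2:ℕ) * Real.log (x i)))]
    rw [Finset.sum_congr rfl (fun (j : J) _ => by ring :
      ∀ j ∈ univ, y j ^ (2:ℕ) * Real.log (y j) * (-2) = (-2) * (y j ^ (2:ℕ) * Real.log (y j)))]
    rw [← Finset.mul_sum, ← Finset.mul_sum]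
    ring
  -- D ≤ 0 from the sign of f on the left of 1
  have hD0 : D ≤ 0 := by
    have hslope := (hf'.hasDerivWithinAt (s := Set.Iio 1))
    rw [hasDerivWithinAt_iff_tendsto_slope] at hslope
    have hdiff : Set.Iio (1 : ℝ) \ {1} = Set.Iio 1 :=
      Set.diff_singleton_eq_self (by simp)
    rw [hdiff] at hslope
    have hmem : Set.Ioo (0 : ℝ) 1 ∈ nhdsWithin 1 (Set.Iio (1 : ℝ)) :=
      Ioo_mem_nhdsLT_of_mem ⟨by norm_num, le_rfl⟩
    have key : ∀ᶠ z in nhdsWithin 1 (Set.Iio (1 : ℝ)), slope f 1 z ≤ 0 := by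
      apply Filter.eventually_of_mem hmem
      intro z hz
      rw [slope_def_field]
      apply div_nonpos_of_nonneg_of_nonpos
      · rw [hf1, sub_zero]; exact hf_nonneg z hz
      · linarith [hz.2]
    exact le_of_tendsto hslope key
  -- conclude
  have hlogsq : ∀ (r : ℝ), 0 < r → Real.log (r ^ (2 : ℕ)) = 2 * Real.log r := by
    intro r hr
    rw [Real.log_pow]
    norm_num
  calc ∑ i, x i ^ (2:ℕ) * Real.log (x i ^ (2:ℕ)) + ∑ j, y j ^ (2:ℕ) * Real.log (y j ^ (2:ℕ))
      = 2 * ((∑ i, x i ^ (2:ℕ) * Real.log (x i)) + ∑ j, y j ^ (2:ℕ) * Real.log (y j)) := by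
        rw [Finset.sum_congr rfl (fun (i : I) _ => by rw [hlogsq _ (hx i)]; ring :
          ∀ i ∈ univ, x i ^ (2:ℕ) * Real.log (x i ^ (2:ℕ)) = 2 * (x i ^ (2:ℕ) * Real.log (x i)))]
        rw [Finset.sum_congr rfl (fun (j : J) _ => by rw [hlogsq _ (hy j)]; ring :
          ∀ j ∈ univ, y j ^ (2:ℕ) * Real.log (y j ^ (2:ℕ)) = 2 * (y j ^ (2:ℕ) * Real.log (y j)))]
        rw [← Finset.mul_sum, ← Finset.mul_sum]
        ring
    _ ≤ 2 * Real.log c := by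
        have : (∑ i, x i ^ (2:ℕ) * Real.log (x i)) + ∑ j, y j ^ (2:ℕ) * Real.log (y j) ≤ Real.log c := by
          rw [hDdef] at hD0; linarith
        linarith

theorem entropic_uncertainty_projective
    {H : Type*} [NormedAddCommGroup H] [InnerProductSpace ℂ H] [FiniteDimensional ℂ H]
    {m n : ℕ} (P : Fin m → H →L[ℂ] H) (Q : Fin n → H →L[ℂ] H)
    (hPsa : ∀ i, IsSelfAdjoint (P i)) (hPidem : ∀ i, P i ∘L P i = P i)
    (hQsa : ∀ j, IsSelfAdjoint (Q j)) (hQidem : ∀ j, Q j ∘L Q j = Q j)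
    (hPsum : ∑ i, P i = 1) (hQsum : ∑ j, Q j = 1)
    (ψ : H) (hψ : ‖ψ‖ = 1) :
    (-∑ i, (inner ℂ ψ (P i ψ) : ℂ).re * Real.logb 2 (inner ℂ ψ (P i ψ) : ℂ).re) +
      (-∑ j, (inner ℂ ψ (Q j ψ) : ℂ).re * Real.logb 2 (inner ℂ ψ (Q j ψ) : ℂ).re) ≥
    -2 * Real.logb 2 (sSup {r : ℝ | ∃ i j, P i ψ ≠ 0 ∧ Q j ψ ≠ 0 ∧
      r = ‖(inner ℂ ψ ((P i ∘L Q j) ψ) : ℂ)‖ / (‖P i ψ‖ * ‖Q j ψ‖)}) := by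
  classical
  have hψ0 : ψ ≠ 0 := by
    intro h; rw [h, norm_zero] at hψ; norm_num at hψ
  -- self-adjointness in inner-product form
  have hPadj : ∀ i (a b : H), (inner ℂ (P i a) b : ℂ) = inner ℂ a (P i b) := by
    intro i a b
    rw [← ContinuousLinearMap.adjoint_inner_left,
      (ContinuousLinearMap.isSelfAdjoint_iff' ).mp (hPsa i)]
  have hQadj : ∀ j (a b : H), (inner ℂ (Q j a) b : ℂ) = inner ℂ a (Q j b) := by
    intro j a b
    rw [← ContinuousLinearMap.adjoint_inner_left,
      (ContinuousLinearMap.isSelfAdjoint_iff' ).mp (hQsa j)]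
  -- ⟪ψ, P i ψ⟫ = ‖P i ψ‖²
  have hPval : ∀ i, (inner ℂ ψ (P i ψ) : ℂ) = ((‖P i ψ‖ ^ 2 : ℝ) : ℂ) := by
    intro i
    have h1 : P i ψ = P i (P i ψ) := by
      rw [← ContinuousLinearMap.comp_apply, hPidem i]
    rw [h1, ← hPadj i, ← h1, inner_self_eq_norm_sq_to_K]
    norm_cast
  have hQval : ∀ j, (inner ℂ ψ (Q j ψ) : ℂ) = ((‖Q j ψ‖ ^ 2 : ℝ) : ℂ) := by
    intro j
    have h1 : Q j ψ = Q j (Q j ψ) := by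
      rw [← ContinuousLinearMap.comp_apply, hQidem j]
    rw [h1, ← hQadj j, ← h1, inner_self_eq_norm_sq_to_K]
    norm_cast
  -- sums of squared norms
  have hPsumnorm : ∀ φ : H, ∑ i, ‖P i φ‖ ^ 2 = ‖φ‖ ^ 2 := by
    intro φ
    have h1 : (inner ℂ φ φ : ℂ) = ∑ i, ((‖P i φ‖ ^ 2 : ℝ) : ℂ) := by
      calc (inner ℂ φ φ : ℂ) = inner ℂ φ ((∑ i, P i) φ) := by rw [hPsum]; rfl
        _ = ∑ i, (inner ℂ φ (P i φ) : ℂ) := by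
            rw [ContinuousLinearMap.sum_apply, inner_sum]
        _ = ∑ i, ((‖P i φ‖ ^ 2 : ℝ) : ℂ) := by
            apply Finset.sum_congr rfl
            intro i _
            have h1 : P i φ = P i (P i φ) := by
              rw [← ContinuousLinearMap.comp_apply, hPidem i]
            rw [h1, ← hPadj i, ← h1, inner_self_eq_norm_sq_to_K]
            norm_cast
    have h2 := congrArg Complex.re h1
    rw [inner_self_eq_norm_sq_to_K (𝕜 := ℂ)] at h2
    simpa [← Complex.ofReal_pow] using h2.symm
  have hQsumnorm : ∀ φ : H, ∑ j, ‖Q j φ‖ ^ 2 = ‖φ‖ ^ 2 := by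
    intro φ
    have h1 : (inner ℂ φ φ : ℂ) = ∑ j, ((‖Q j φ‖ ^ 2 : ℝ) : ℂ) := by
      calc (inner ℂ φ φ : ℂ) = inner ℂ φ ((∑ j, Q j) φ) := by rw [hQsum]; rfl
        _ = ∑ j, (inner ℂ φ (Q j φ) : ℂ) := by
            rw [ContinuousLinearMap.sum_apply, inner_sum]
        _ = ∑ j, ((‖Q j φ‖ ^ 2 : ℝ) : ℂ) := by
            apply Finset.sum_congr rfl
            intro j _
            have h1 : Q j φ = Q j (Q j φ) := by
              rw [← ContinuousLinearMap.comp_apply, hQidem j]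
            rw [h1, ← hQadj j, ← h1, inner_self_eq_norm_sq_to_K]
            norm_cast
    have h2 := congrArg Complex.re h1
    rw [inner_self_eq_norm_sq_to_K (𝕜 := ℂ)] at h2
    simpa [← Complex.ofReal_pow] using h2.symm
  -- mutual orthogonality
  have hPorth : ∀ i i' : Fin m, i ≠ i' → (inner ℂ (P i ψ) (P i' ψ) : ℂ) = 0 := by
    intro i i' hne
    have hz : P i (P i' ψ) = 0 := by
      have h1 := hPsumnorm (P i' ψ)
      have h2 : P i' (P i' ψ) = P i' ψ := by
        rw [← ContinuousLinearMap.comp_apply, hPidem i']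
      have h3 : ∑ k ∈ univ.erase i', ‖P k (P i' ψ)‖ ^ 2 = 0 := by
        have h4 : ‖P i' (P i' ψ)‖ ^ 2 + ∑ k ∈ univ.erase i', ‖P k (P i' ψ)‖ ^ 2
            = ∑ k, ‖P k (P i' ψ)‖ ^ 2 :=
          Finset.add_sum_erase univ (fun k => ‖P k (P i' ψ)‖ ^ 2) (mem_univ i')
        rw [h2] at h4
        linarith
      have h5 : ∀ k ∈ univ.erase i', ‖P k (P i' ψ)‖ ^ 2 = 0 := by
        intro k hk
        exact le_antisymm (h3 ▸ Finset.single_le_sum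
          (fun k _ => sq_nonneg ‖P k (P i' ψ)‖) hk) (sq_nonneg _)
      have := h5 i (Finset.mem_erase.mpr ⟨hne, mem_univ i⟩)
      rwa [sq_eq_zero_iff, norm_eq_zero] at this
    have h6 : P i (P i ψ) = P i ψ := by
      rw [← ContinuousLinearMap.comp_apply, hPidem i]
    calc (inner ℂ (P i ψ) (P i' ψ) : ℂ) = inner ℂ (P i (P i ψ)) (P i' ψ) := by rw [h6]
      _ = inner ℂ (P i ψ) (P i (P i' ψ)) := hPadj i _ _
      _ = 0 := by rw [hz, inner_zero_right]
  have hQorth : ∀ j j' : Fin n, j ≠ j' → (inner ℂ (Q j ψ) (Q j' ψ) : ℂ) = 0 := by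
    intro j j' hne
    have hz : Q j (Q j' ψ) = 0 := by
      have h1 := hQsumnorm (Q j' ψ)
      have h2 : Q j' (Q j' ψ) = Q j' ψ := by
        rw [← ContinuousLinearMap.comp_apply, hQidem j']
      have h3 : ∑ k ∈ univ.erase j', ‖Q k (Q j' ψ)‖ ^ 2 = 0 := by
        have h4 : ‖Q j' (Q j' ψ)‖ ^ 2 + ∑ k ∈ univ.erase j', ‖Q k (Q j' ψ)‖ ^ 2
            = ∑ k, ‖Q k (Q j' ψ)‖ ^ 2 :=
          Finset.add_sum_erase univ (fun k => ‖Q k (Q j' ψ)‖ ^ 2) (mem_univ j')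
        rw [h2] at h4
        linarith
      have h5 : ∀ k ∈ univ.erase j', ‖Q k (Q j' ψ)‖ ^ 2 = 0 := by
        intro k hk
        exact le_antisymm (h3 ▸ Finset.single_le_sum
          (fun k _ => sq_nonneg ‖Q k (Q j' ψ)‖) hk) (sq_nonneg _)
      have := h5 j (Finset.mem_erase.mpr ⟨hne, mem_univ j⟩)
      rwa [sq_eq_zero_iff, norm_eq_zero] at this
    have h6 : Q j (Q j ψ) = Q j ψ := by
      rw [← ContinuousLinearMap.comp_apply, hQidem j]
    calc (inner ℂ (Q j ψ) (Q j' ψ) : ℂ) = inner ℂ (Q j (Q j ψ)) (Q j' ψ) := by rw [h6]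
      _ = inner ℂ (Q j ψ) (Q j (Q j' ψ)) := hQadj j _ _
      _ = 0 := by rw [hz, inner_zero_right]
  -- the overlap set
  set M : Set ℝ := {r : ℝ | ∃ i j, P i ψ ≠ 0 ∧ Q j ψ ≠ 0 ∧
      r = ‖(inner ℂ ψ ((P i ∘L Q j) ψ) : ℂ)‖ / (‖P i ψ‖ * ‖Q j ψ‖)} with hMdef
  have hMbdd : BddAbove M := by
    refine ⟨1, ?_⟩
    rintro r ⟨i, j, hPi, hQj, rfl⟩
    rw [ContinuousLinearMap.comp_apply, ← hPadj i]
    refine div_le_one_of_le₀ ((norm_inner_le_norm _ _).trans (le_of_eq rfl)) (by positivity)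
  have hpair : ∃ (i : Fin m) (j : Fin n), (inner ℂ (P i ψ) (Q j ψ) : ℂ) ≠ 0 := by
    by_contra hno
    push_neg at hno
    have h1 : (inner ℂ ψ ψ : ℂ) = ∑ i, ∑ j, (inner ℂ (P i ψ) (Q j ψ) : ℂ) := by
      calc (inner ℂ ψ ψ : ℂ) = inner ℂ ((∑ i, P i) ψ) ((∑ j, Q j) ψ) := by
            rw [hPsum, hQsum]; rfl
        _ = ∑ i, ∑ j, (inner ℂ (P i ψ) (Q j ψ) : ℂ) := by
            rw [ContinuousLinearMap.sum_apply, ContinuousLinearMap.sum_apply, sum_inner]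
            exact Finset.sum_congr rfl fun i _ => inner_sum _ _ _
    rw [Finset.sum_eq_zero (fun i _ => Finset.sum_eq_zero (fun j _ => hno i j))] at h1
    exact hψ0 (inner_self_eq_zero.mp h1)
  have hcpos : 0 < sSup M := by
    obtain ⟨i, j, hij⟩ := hpair
    have hPi : P i ψ ≠ 0 := by
      intro h; rw [h] at hij; exact hij (inner_zero_left _)
    have hQj : Q j ψ ≠ 0 := by
      intro h; rw [h] at hij; exact hij (inner_zero_right _)
    have hmem : ‖(inner ℂ ψ ((P i ∘L Q j) ψ) : ℂ)‖ / (‖P i ψ‖ * ‖Q j ψ‖) ∈ M :=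
      ⟨i, j, hPi, hQj, rfl⟩
    have hrpos : 0 < ‖(inner ℂ ψ ((P i ∘L Q j) ψ) : ℂ)‖ / (‖P i ψ‖ * ‖Q j ψ‖) := by
      apply div_pos _ (mul_pos (norm_pos_iff.mpr hPi) (norm_pos_iff.mpr hQj))
      rw [ContinuousLinearMap.comp_apply, ← hPadj i]
      exact norm_pos_iff.mpr hij
    exact lt_of_lt_of_le hrpos (le_csSup hMbdd hmem)
  -- normalized vectors over supports
  set x : {i : Fin m // P i ψ ≠ 0} → ℝ := fun i => ‖P i.1 ψ‖ with hxdef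
  set y : {j : Fin n // Q j ψ ≠ 0} → ℝ := fun j => ‖Q j.1 ψ‖ with hydef
  have hx : ∀ i, 0 < x i := fun i => norm_pos_iff.mpr i.2
  have hy : ∀ j, 0 < y j := fun j => norm_pos_iff.mpr j.2
  set u : {i : Fin m // P i ψ ≠ 0} → H :=
    fun i => ((‖P i.1 ψ‖⁻¹ : ℝ) : ℂ) • P i.1 ψ with hudef
  set v : {j : Fin n // Q j ψ ≠ 0} → H :=
    fun j => ((‖Q j.1 ψ‖⁻¹ : ℝ) : ℂ) • Q j.1 ψ with hvdef
  set T : {j : Fin n // Q j ψ ≠ 0} → {i : Fin m // P i ψ ≠ 0} → ℂ :=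
    fun j i => inner ℂ (v j) (u i) with hTdef
  have honu : Orthonormal ℂ u := by
    refine ⟨fun i => ?_, fun i i' h => ?_⟩
    · rw [hudef]
      simp only [norm_smul, Complex.norm_real, Real.norm_eq_abs,
        _root_.abs_of_nonneg (inv_nonneg.mpr (norm_nonneg (P i.1 ψ)))]
      exact inv_mul_cancel₀ (norm_ne_zero_iff.mpr i.2)
    · rw [hudef]
      simp only [inner_smul_left, inner_smul_right]
      rw [hPorth i.1 i'.1 (fun hcc => h (Subtype.ext hcc))]
      ring
  have honv : Orthonormal ℂ v := by
    refine ⟨fun j => ?_, fun j j' h => ?_⟩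
    · rw [hvdef]
      simp only [norm_smul, Complex.norm_real, Real.norm_eq_abs,
        _root_.abs_of_nonneg (inv_nonneg.mpr (norm_nonneg (Q j.1 ψ)))]
      exact inv_mul_cancel₀ (norm_ne_zero_iff.mpr j.2)
    · rw [hvdef]
      simp only [inner_smul_left, inner_smul_right]
      rw [hQorth j.1 j'.1 (fun hcc => h (Subtype.ext hcc))]
      ring
  -- subtype sums
  have hsubP : ∀ f : Fin m → ℝ, (∀ i, P i ψ = 0 → f i = 0) →
      ∑ i : {i : Fin m // P i ψ ≠ 0}, f i.1 = ∑ i : Fin m, f i := by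
    intro f hf
    rw [← Finset.sum_subtype (univ.filter (fun i => P i ψ ≠ 0)) (by simp) f]
    exact Finset.sum_filter_of_ne fun i _ hne => fun h0 => hne (hf i h0)
  have hsubQ : ∀ f : Fin n → ℝ, (∀ j, Q j ψ = 0 → f j = 0) →
      ∑ j : {j : Fin n // Q j ψ ≠ 0}, f j.1 = ∑ j : Fin n, f j := by
    intro f hf
    rw [← Finset.sum_subtype (univ.filter (fun j => Q j ψ ≠ 0)) (by simp) f]
    exact Finset.sum_filter_of_ne fun j _ hne => fun h0 => hne (hf j h0)
  have hsumP : ∑ i : {i : Fin m // P i ψ ≠ 0}, P i.1 ψ = ψ := by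
    have h1 : ∑ i : Fin m, P i ψ = ψ := by
      rw [← ContinuousLinearMap.sum_apply, hPsum]; rfl
    rw [← Finset.sum_subtype (univ.filter (fun i => P i ψ ≠ 0)) (by simp)
      (fun i => P i ψ), Finset.sum_filter_of_ne fun i _ hne => hne, h1]
  -- hypothesis (y = T x)
  have hyT : ∀ j, ((y j : ℝ) : ℂ) = ∑ i, T j i * ((x i : ℝ) : ℂ) := by
    intro j
    have h1 : ∀ i, T j i * ((x i : ℝ) : ℂ) = inner ℂ (v j) (P i.1 ψ) := by
      intro i
      simp only [hTdef, hudef, hxdef]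
      rw [mul_comm, ← inner_smul_right]
      congr 1
      simp only [smul_smul]
      rw [← Complex.ofReal_mul, mul_inv_cancel₀ (norm_ne_zero_iff.mpr i.2),
        Complex.ofReal_one, one_smul]
    rw [Finset.sum_congr rfl (fun i _ => h1 i), ← inner_sum, hsumP, hvdef]
    rw [inner_smul_left, Complex.conj_ofReal, hQadj j, hQval j, hydef]
    rw [← Complex.ofReal_mul]
    congr 1
    have hq0 : ‖Q j.1 ψ‖ ≠ 0 := norm_ne_zero_iff.mpr j.2
    show ‖Q j.1 ψ‖ = ‖Q j.1 ψ‖⁻¹ * ‖Q j.1 ψ‖ ^ 2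
    rw [pow_two, ← mul_assoc, inv_mul_cancel₀ hq0, one_mul]
  -- the 2→2 bound via Bessel
  have hT2 : ∀ ξ : {i : Fin m // P i ψ ≠ 0} → ℂ, ∑ j, ‖∑ i, T j i * ξ i‖ ^ 2 ≤ ∑ i, ‖ξ i‖ ^ 2 := by
    intro ξ
    have h1 : ∀ j, ∑ i, T j i * ξ i = (inner ℂ (v j) (∑ i, ξ i • u i) : ℂ) := by
      intro j
      rw [inner_sum]
      exact Finset.sum_congr rfl fun i _ => by rw [inner_smul_right, hTdef]; ring
    have h2 : ∑ j, ‖(inner ℂ (v j) (∑ i, ξ i • u i) : ℂ)‖ ^ 2 ≤ ‖∑ i, ξ i • u i‖ ^ 2 :=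
      honv.sum_inner_products_le _
    have h3 : ‖∑ i, ξ i • u i‖ ^ 2 = ∑ i, ‖ξ i‖ ^ 2 := by
      have h4 := honu.inner_sum ξ ξ univ
      rw [norm_sq_eq_re_inner (𝕜 := ℂ), h4, map_sum]
      apply Finset.sum_congr rfl
      intro i _
      rw [RCLike.conj_mul]
      norm_cast
    calc ∑ j, ‖∑ i, T j i * ξ i‖ ^ 2
        = ∑ j, ‖(inner ℂ (v j) (∑ i, ξ i • u i) : ℂ)‖ ^ 2 := by
          exact Finset.sum_congr rfl fun j _ => by rw [h1]
      _ ≤ ‖∑ i, ξ i • u i‖ ^ 2 := h2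
      _ = ∑ i, ‖ξ i‖ ^ 2 := h3
  -- the 1→∞ bound
  have hTc : ∀ j i, ‖T j i‖ ≤ sSup M := by
    intro j i
    apply le_csSup hMbdd
    refine ⟨i.1, j.1, i.2, j.2, ?_⟩
    have h2 : (T j i : ℂ) = ((‖Q j.1 ψ‖⁻¹ : ℝ) : ℂ) *
        (((‖P i.1 ψ‖⁻¹ : ℝ) : ℂ) * (inner ℂ (Q j.1 ψ) (P i.1 ψ) : ℂ)) := by
      simp only [hTdef, hudef, hvdef]
      rw [inner_smul_left, inner_smul_right, Complex.conj_ofReal]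
    rw [ContinuousLinearMap.comp_apply, ← hPadj i.1, h2,
      norm_mul, norm_mul, Complex.norm_real, Complex.norm_real,
      Real.norm_eq_abs, Real.norm_eq_abs,
      _root_.abs_of_nonneg (inv_nonneg.mpr (norm_nonneg (Q j.1 ψ))),
      _root_.abs_of_nonneg (inv_nonneg.mpr (norm_nonneg (P i.1 ψ))),
      ← inner_conj_symm (P i.1 ψ), RCLike.norm_conj]
    field_simp
  -- normalization
  have hx2 : ∑ i, x i ^ (2 : ℕ) = 1 := by
    have h1 : ∑ i : Fin m, ‖P i ψ‖ ^ 2 = 1 := by rw [hPsumnorm ψ, hψ]; norm_num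
    rw [← h1]
    exact hsubP (fun i => ‖P i ψ‖ ^ 2) (fun i h0 => by show ‖P i ψ‖ ^ 2 = 0; rw [h0, norm_zero]; norm_num)
  have hy2 : ∑ j, y j ^ (2 : ℕ) = 1 := by
    have h1 : ∑ j : Fin n, ‖Q j ψ‖ ^ 2 = 1 := by rw [hQsumnorm ψ, hψ]; norm_num
    rw [← h1]
    exact hsubQ (fun j => ‖Q j ψ‖ ^ 2) (fun j h0 => by show ‖Q j ψ‖ ^ 2 = 0; rw [h0, norm_zero]; norm_num)
  -- apply the two analytic lemmas
  have hKEY := entropy_step x y (sSup M) hx hy hcpos hx2 hy2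
    (fun t ht0 ht1 => riesz_thorin_step x y T (sSup M) t hx hy hcpos hTc hT2 hyT ht0 ht1)
  -- translate the goal
  have hL2 : 0 < Real.log 2 := Real.log_pos one_lt_two
  have hgoalP : ∑ i, (inner ℂ ψ (P i ψ) : ℂ).re * Real.logb 2 (inner ℂ ψ (P i ψ) : ℂ).re
      = (∑ i, x i ^ (2 : ℕ) * Real.log (x i ^ (2 : ℕ))) / Real.log 2 := by
    have hre : ∀ i, (inner ℂ ψ (P i ψ) : ℂ).re = ‖P i ψ‖ ^ 2 := by
      intro i
      rw [hPval i, Complex.ofReal_re]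
    rw [Finset.sum_congr rfl (fun i _ => by rw [hre i] :
      ∀ i ∈ univ, (inner ℂ ψ (P i ψ) : ℂ).re * Real.logb 2 (inner ℂ ψ (P i ψ) : ℂ).re
        = ‖P i ψ‖ ^ 2 * Real.logb 2 (‖P i ψ‖ ^ 2))]
    have hzP : ∀ i : Fin m, P i ψ = 0 → ‖P i ψ‖ ^ 2 * Real.logb 2 (‖P i ψ‖ ^ 2) = 0 := by
      intro i h0
      rw [h0, norm_zero]
      norm_num
    rw [← hsubP (fun i => ‖P i ψ‖ ^ 2 * Real.logb 2 (‖P i ψ‖ ^ 2)) hzP]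
    rw [Finset.sum_div]
    apply Finset.sum_congr rfl
    intro i _
    rw [Real.logb, hxdef]
    ring
  have hgoalQ : ∑ j, (inner ℂ ψ (Q j ψ) : ℂ).re * Real.logb 2 (inner ℂ ψ (Q j ψ) : ℂ).re
      = (∑ j, y j ^ (2 : ℕ) * Real.log (y j ^ (2 : ℕ))) / Real.log 2 := by
    have hre : ∀ j, (inner ℂ ψ (Q j ψ) : ℂ).re = ‖Q j ψ‖ ^ 2 := by
      intro j
      rw [hQval j, Complex.ofReal_re]
    rw [Finset.sum_congr rfl (fun j _ => by rw [hre j] :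
      ∀ j ∈ univ, (inner ℂ ψ (Q j ψ) : ℂ).re * Real.logb 2 (inner ℂ ψ (Q j ψ) : ℂ).re
        = ‖Q j ψ‖ ^ 2 * Real.logb 2 (‖Q j ψ‖ ^ 2))]
    have hzQ : ∀ j : Fin n, Q j ψ = 0 → ‖Q j ψ‖ ^ 2 * Real.logb 2 (‖Q j ψ‖ ^ 2) = 0 := by
      intro j h0
      rw [h0, norm_zero]
      norm_num
    rw [← hsubQ (fun j => ‖Q j ψ‖ ^ 2 * Real.logb 2 (‖Q j ψ‖ ^ 2)) hzQ]
    rw [Finset.sum_div]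
    apply Finset.sum_congr rfl
    intro j _
    rw [Real.logb, hydef]
    ring
  rw [ge_iff_le, hgoalP, hgoalQ, Real.logb]
  set a := ∑ i, x i ^ (2 : ℕ) * Real.log (x i ^ (2 : ℕ)) with hadef
  set b := ∑ j, y j ^ (2 : ℕ) * Real.log (y j ^ (2 : ℕ)) with hbdef
  have hdiv : (a + b) / Real.log 2 ≤ (2 * Real.log (sSup M)) / Real.log 2 := by
    exact div_le_div_of_nonneg_right hKEY hL2.le
  have e1 : (a + b) / Real.log 2 = a / Real.log 2 + b / Real.log 2 := add_div _ _ _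
  have e2 : (2 * Real.log (sSup M)) / Real.log 2 = 2 * (Real.log (sSup M) / Real.log 2) :=
    mul_div_assoc _ _ _
  linarith
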